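/- Let p, q' ≥ 2 and set N = p + q'. In ℝ^N consider the positive roots of D_N, namely e_i ± e_j for 1 ≤ i < j ≤ N. Let ρ^g = ∑_{i=1}^N (N - i) e_i, ρ^k = ∑_{i=1}^p (p - i) e_i + ∑_{j=1}^{q'} (q' - j) e_{p+j}, and μ₁ = q' e_1 + (q'-1)∑_{i=2}^p e_i + (p-1) e_{p+1}. Then the coordinates of μ₁ + ρ^k are a permutation of the coordinates of ρ^g, and consequently ∏_{α∈R⁺} ⟨μ₁ + ρ^k, α⟩ = ± ∏_{α∈R⁺} ⟨ρ^g, α⟩. -/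

import Mathlib

open Finset

def dnRootProd {N : ℕ} (v : Fin N → ℝ) : ℝ :=
  ∏ p ∈ Finset.univ.filter (fun p : Fin N × Fin N => p.1 < p.2),
    ((v p.1 - v p.2) * (v p.1 + v p.2))

lemma prod_pairs {N : ℕ} (f : Fin N × Fin N → ℝ) :
    ∏ p ∈ Finset.univ.filter (fun p : Fin N × Fin N => p.1 < p.2), f p
      = ∏ i : Fin N, ∏ j ∈ Ioi i, f (i, j) := by
  rw [Finset.prod_sigma']
  refine (Finset.prod_bij (fun x _ => (x.1, x.2)) ?_ ?_ ?_ ?_).symm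
  · intro x hx
    simp only [Finset.mem_sigma, Finset.mem_Ioi] at hx
    simp [hx.2]
  · rintro ⟨a1, a2⟩ _ ⟨b1, b2⟩ _ h
    simpa using h
  · rintro ⟨a1, a2⟩ ha
    simp only [Finset.mem_filter] at ha
    exact ⟨⟨a1, a2⟩, by simp [ha.2], rfl⟩
  · intros; rfl

lemma dn_eq {N : ℕ} (u : Fin N → ℝ) :
    dnRootProd u = (-1) ^ (∑ i : Fin N, (Ioi i).card) *
      Matrix.det (Matrix.vandermonde fun i => u i ^ 2) := by
  rw [Matrix.det_vandermonde, dnRootProd, prod_pairs]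
  rw [← Finset.prod_pow_eq_pow_sum, ← Finset.prod_mul_distrib]
  congr 1; ext i
  rw [← Finset.prod_const, ← Finset.prod_mul_distrib]
  congr 1; ext j
  ring

lemma dn_perm {N : ℕ} (v : Fin N → ℝ) (σ : Equiv.Perm (Fin N)) :
    dnRootProd (fun i => v (σ i)) = ((Equiv.Perm.sign σ : ℤ) : ℝ) * dnRootProd v := by
  rw [dn_eq, dn_eq]
  have h : (Matrix.vandermonde fun i => v (σ i) ^ 2)
      = (Matrix.vandermonde fun i => v i ^ 2).submatrix σ id := by
    ext i j; simp [Matrix.vandermonde]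
  rw [h, Matrix.det_permute]
  ring

theorem grassmannian_mu1_perm (p q' : ℕ) (hp : 2 ≤ p) (hq : 2 ≤ q') :
    let N := p + q'
    let ρg : Fin N → ℝ := fun i => (N : ℝ) - 1 - (i : ℕ)
    let ρk : Fin N → ℝ := fun i =>
      if (i : ℕ) < p then (p : ℝ) - 1 - (i : ℕ) else (q' : ℝ) - 1 - ((i : ℕ) - p : ℕ)
    let μ₁ : Fin N → ℝ := fun i =>
      if (i : ℕ) = 0 then (q' : ℝ)
      else if (i : ℕ) < p then (q' : ℝ) - 1
      else if (i : ℕ) = p then (p : ℝ) - 1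
      else 0
    (∃ σ : Equiv.Perm (Fin N), ∀ i, μ₁ i + ρk i = ρg (σ i)) ∧
      (dnRootProd (fun i => μ₁ i + ρk i) = dnRootProd ρg ∨
        dnRootProd (fun i => μ₁ i + ρk i) = -dnRootProd ρg) := by
  intro N ρg ρk μ₁
  have hN : N = p + q' := rfl
  set f : Fin N → Fin N := fun i =>
    ⟨if (i : ℕ) = 0 then 0 else if (i : ℕ) < p then (i : ℕ) + 1
      else if (i : ℕ) = p then 1 else (i : ℕ), by
        have := i.isLt; split_ifs <;> omega⟩ with hf
  have hinj : Function.Injective f := by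
    intro a b hab
    have h := congrArg Fin.val hab
    simp only [hf] at h
    apply Fin.ext
    split_ifs at h <;> omega
  let σ : Equiv.Perm (Fin N) :=
    Equiv.ofBijective f ((Finite.injective_iff_bijective).1 hinj)
  have hσ : ∀ i, μ₁ i + ρk i = ρg (f i) := by
    intro i
    have hi : (i : ℕ) < p + q' := i.isLt
    simp only [μ₁, ρk, ρg, hf, hN]
    by_cases h0 : (i : ℕ) = 0
    · have hlt : 0 < p := by omega
      simp only [h0, if_pos rfl, if_pos hlt, if_true]
      push_cast; ring
    · by_cases hlt : (i : ℕ) < p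
      · simp only [if_neg h0, if_pos hlt]
        push_cast; ring
      · by_cases hep : (i : ℕ) = p
        · have hsub : (i : ℕ) - p = 0 := by omega
          simp only [if_neg h0, if_neg hlt, if_pos hep, hsub]
          push_cast; ring
        · simp only [if_neg h0, if_neg hlt, if_neg hep]
          rw [Nat.cast_sub (by omega : p ≤ (i : ℕ))]
          push_cast; ring
  have hσ' : ∀ i, μ₁ i + ρk i = ρg (σ i) := hσ
  refine ⟨⟨σ, hσ'⟩, ?_⟩
  have hfun : (fun i => μ₁ i + ρk i) = fun i => ρg (σ i) := funext hσ'
  rw [hfun, dn_perm]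
  rcases Int.units_eq_one_or (Equiv.Perm.sign σ) with hs | hs <;> rw [hs] <;>
    [left; right] <;> push_cast <;> ring
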